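/- Let e and f be convex sets in ℝ^d with tangent (direction) spaces E = span(e - x) and F = span(f - y). If the relative interiors of e and f intersect, then the dimension of the affine span of e ∩ f equals dim(E ∩ F). -/

import Mathlib

open Set

lemma aux_exists_pos_add_smul_mem {d : ℕ} {s : Set (EuclideanSpace ℝ (Fin d))}
    {z v : EuclideanSpace ℝ (Fin d)} (hz : z ∈ intrinsicInterior ℝ s)
    (hv : v ∈ vectorSpan ℝ s) : ∃ t : ℝ, 0 < t ∧ z + t • v ∈ s := by
  obtain ⟨z', hz', hzz⟩ := hz
  rw [mem_interior_iff_mem_nhds, Metric.mem_nhds_iff] at hz'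
  obtain ⟨ε, hε, hball⟩ := hz'
  set t : ℝ := ε / (2 * (‖v‖ + 1)) with ht
  have htpos : 0 < t := by positivity
  have hmem : z + t • v ∈ affineSpan ℝ s := by
    have : (t • v) +ᵥ (z' : EuclideanSpace ℝ (Fin d)) ∈ affineSpan ℝ s := by
      apply AffineSubspace.vadd_mem_of_mem_direction
      · rw [direction_affineSpan]; exact Submodule.smul_mem _ _ hv
      · exact z'.2
    simpa [hzz, vadd_eq_add, add_comm] using this
  refine ⟨t, htpos, ?_⟩
  have : (⟨z + t • v, hmem⟩ : affineSpan ℝ s) ∈ Metric.ball z' ε := by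
    rw [Metric.mem_ball, Subtype.dist_eq]
    simp only [hzz]
    rw [dist_eq_norm]
    have : z + t • v - z = t • v := by abel
    rw [this, norm_smul, Real.norm_eq_abs, abs_of_pos htpos]
    have h1 : t * ‖v‖ < t * (2 * (‖v‖ + 1)) := by
      apply mul_lt_mul_of_pos_left _ htpos
      nlinarith [norm_nonneg v]
    have h2 : t * (2 * (‖v‖ + 1)) = ε := by
      rw [ht]; exact div_mul_cancel₀ _ (by positivity)
    linarith
  exact hball this


/-- If the relative interiors of convex sets `e` and `f` in `ℝ^d` intersect,
then the dimension of the affine span of `e ∩ f` equals `dim (E ⊓ F)` where `E, F` are the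
tangent spaces `span (e - x)`, `span (f - y)`. -/
theorem dim_inter_eq_dim_tangent_inter {d : ℕ}
    (e f : Set (EuclideanSpace ℝ (Fin d))) (he : Convex ℝ e) (hf : Convex ℝ f)
    (x y : EuclideanSpace ℝ (Fin d)) (hx : x ∈ e) (hy : y ∈ f)
    (E F : Submodule ℝ (EuclideanSpace ℝ (Fin d)))
    (hE : E = Submodule.span ℝ ((· - x) '' e))
    (hF : F = Submodule.span ℝ ((· - y) '' f))
    (hri : (intrinsicInterior ℝ e ∩ intrinsicInterior ℝ f).Nonempty) :
    Module.finrank ℝ (vectorSpan ℝ (e ∩ f)) = Module.finrank ℝ ↥(E ⊓ F) := by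
  obtain ⟨z, hze, hzf⟩ := hri
  have hze' : z ∈ e := intrinsicInterior_subset hze
  have hzf' : z ∈ f := intrinsicInterior_subset hzf
  have hEe : E = vectorSpan ℝ e := by
    rw [hE, vectorSpan_eq_span_vsub_set_right ℝ hx]
    rfl
  have hFf : F = vectorSpan ℝ f := by
    rw [hF, vectorSpan_eq_span_vsub_set_right ℝ hy]
    rfl
  suffices h : vectorSpan ℝ (e ∩ f) = E ⊓ F by rw [h]
  apply le_antisymm
  · rw [hEe, hFf]
    exact le_inf (vectorSpan_mono ℝ inter_subset_left) (vectorSpan_mono ℝ inter_subset_right)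
  · rintro v ⟨hvE, hvF⟩
    obtain ⟨t1, ht1, hw1⟩ := aux_exists_pos_add_smul_mem hze (hEe ▸ hvE)
    obtain ⟨t2, ht2, hw2⟩ := aux_exists_pos_add_smul_mem hzf (hFf ▸ hvF)
    set t : ℝ := min t1 t2 with htdef
    have htpos : 0 < t := lt_min ht1 ht2
    have key : ∀ (s : Set (EuclideanSpace ℝ (Fin d))), Convex ℝ s → z ∈ s →
        ∀ t' : ℝ, 0 < t' → z + t' • v ∈ s → t ≤ t' → z + t • v ∈ s := by
      intro s hs hzs t' ht' hw htt'
      have ha0 : (0:ℝ) ≤ t / t' := by positivity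
      have ha1 : t / t' ≤ 1 := by
        rw [div_le_one ht']; exact htt'
      have hmem := hs hzs hw (by linarith : (0:ℝ) ≤ 1 - t / t') ha0 (by ring)
      have heq : (1 - t / t') • z + (t / t') • (z + t' • v) = z + t • v := by
        rw [smul_add, smul_smul, div_mul_cancel₀ _ (ne_of_gt ht'), sub_smul, one_smul]
        abel
      rwa [heq] at hmem
    have hwe : z + t • v ∈ e := key e he hze' t1 ht1 hw1 (min_le_left _ _)
    have hwf : z + t • v ∈ f := key f hf hzf' t2 ht2 hw2 (min_le_right _ _)
    have hsub : (z + t • v) -ᵥ z ∈ vectorSpan ℝ (e ∩ f) :=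
      vsub_mem_vectorSpan ℝ ⟨hwe, hwf⟩ ⟨hze', hzf'⟩
    have : (z + t • v) -ᵥ z = t • v := by simp [vsub_eq_sub]
    rw [this] at hsub
    have := Submodule.smul_mem (vectorSpan ℝ (e ∩ f)) t⁻¹ hsub
    rwa [smul_smul, inv_mul_cancel₀ (ne_of_gt htpos), one_smul] at this
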